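/- For any two vertices u and v of a temporal graph, the number of pairwise distance-wise non-dominated (distance, arrival) pairs realized by temporal u-v paths is at most the in-degree d_in(v) of v. -/

import Mathlib

open scoped Classical

structure TEdge (V : Type) where
  src : V
  dst : V
  t : ℝ
  len : ℝ

variable {V : Type}

/-- Consecutive compatibility of temporal edges. -/
def compat (e f : TEdge V) : Prop := e.dst = f.src ∧ e.t + e.len ≤ f.t

/-- A temporal path from `x` to `y`: a nonempty list of temporal edges of `E`,
starting at `x`, ending at `y`, consecutively compatible. -/
def IsPath (E : Set (TEdge V)) (x y : V) (p : List (TEdge V)) : Prop :=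
  p ≠ [] ∧ (∀ e ∈ p, e ∈ E) ∧ p.head?.map TEdge.src = some x ∧
    p.getLast?.map TEdge.dst = some y ∧ List.Chain' compat p

/-- Starting time of a temporal path. -/
def startT (p : List (TEdge V)) : ℝ := ((p.head?).map TEdge.t).getD 0

/-- Ending (arrival) time of a temporal path. -/
def endT (p : List (TEdge V)) : ℝ := ((p.getLast?).map (fun e => e.t + e.len)).getD 0

/-- Distance (sum of traversal times) of a temporal path. -/
def distT (p : List (TEdge V)) : ℝ := (p.map TEdge.len).sum

/-- Any family of pairwise distance-wise non-dominated (distance, arrival)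
pairs realized by temporal `u`-`v` paths has size at most the in-degree of `v`. -/
theorem stmt7 [DecidableEq V] (E : Finset (TEdge V)) (u v : V)
    (F : Finset (ℝ × ℝ))
    (hreal : ∀ da ∈ F, ∃ p, IsPath (↑E : Set (TEdge V)) u v p ∧
      distT p = da.1 ∧ endT p = da.2)
    (hnd : ∀ da ∈ F, ∀ da' ∈ F, da ≠ da' →
      ¬ (da'.1 ≤ da.1 ∧ da'.2 ≤ da.2 ∧ (da'.1 < da.1 ∨ da'.2 < da.2))) :
    F.card ≤ (E.filter (fun e => e.dst = v)).card := by
  classical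
  have key : ∀ da ∈ F, ∃ e, e ∈ E.filter (fun e => e.dst = v) ∧
      e.t + e.len = da.2 := by
    intro da hda
    obtain ⟨p, hp, hd, he⟩ := hreal da hda
    obtain ⟨hne, hE, -, hlast, -⟩ := hp
    have hgl : p.getLast? = some (p.getLast hne) := List.getLast?_eq_getLast hne
    refine ⟨p.getLast hne, ?_, ?_⟩
    · rw [Finset.mem_filter]
      refine ⟨hE _ (List.getLast_mem hne), ?_⟩
      rw [hgl] at hlast
      simpa using hlast
    · rw [← he]
      simp [endT, hgl]
  set f : ℝ × ℝ → TEdge V := fun da =>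
    if h : da ∈ F then (key da h).choose else ⟨v, v, 0, 0⟩ with hf
  apply Finset.card_le_card_of_injOn f
  · intro da hda
    have := (key da hda).choose_spec
    simp only [hf, dif_pos (show da ∈ F from hda), Finset.mem_coe]
    exact this.1
  · intro a ha b hb hab
    by_contra hne
    have hsa := (key a ha).choose_spec
    have hsb := (key b hb).choose_spec
    have ha' : a ∈ F := ha
    have hb' : b ∈ F := hb
    simp only [hf, dif_pos ha', dif_pos hb'] at hab
    have h2 : a.2 = b.2 := by rw [← hsa.2, ← hsb.2, hab]
    rcases lt_trichotomy a.1 b.1 with h1 | h1 | h1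
    · exact hnd b hb' a ha' (Ne.symm hne) ⟨le_of_lt h1, le_of_eq h2, Or.inl h1⟩
    · exact hne (Prod.ext h1 h2)
    · exact hnd a ha' b hb' hne ⟨le_of_lt h1, le_of_eq h2.symm, Or.inl h1⟩
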